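/- Let P_D(·|p⊕x) denote the posterior predictive of a finite mixture Σ_φ P(φ)·P_φ. Under approximate-independence with constant c1 (c1 ≤ P_φ(p)P_φ(s)/P_φ(p⊕s) ≤ 1/c1 for all strings s and each component φ), for labels y, ỹ: P_D(y|p⊕x) - P_D(ỹ|p⊕x) ≥ [Σ_φ P(φ)·P_φ(p)·(c1²·P_φ(x⊕y) - c1^{-2}·P_φ(x⊕ỹ))] / [Σ_φ P(φ)·P_φ(p)·P_φ(x)]. -/
import Mathlib


open Finset

/-- lower bound on the posterior-predictive margin of a finite
mixture in terms of the per-component quantities, under approximate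
independence of the prompt `p` from the test example. -/
theorem mixture_posterior_margin_lower_bound
    {α : Type*} {ι : Type*} [Fintype ι]
    (w : ι → ℝ) (Pφ : ι → List α → ℝ) (c1 : ℝ)
    (hc1 : 0 < c1) (hc1' : c1 ≤ 1)
    (hw : ∀ φ, 0 < w φ) (hP : ∀ φ s, 0 < Pφ φ s)
    (p x : List α) (y ytil : α)
    (hindep : ∀ (φ : ι) (s : List α),
      c1 ≤ Pφ φ p * Pφ φ s / Pφ φ (p ++ s) ∧
      Pφ φ p * Pφ φ s / Pφ φ (p ++ s) ≤ 1 / c1) :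
    (∑ φ, w φ * Pφ φ (p ++ x ++ [y])) / (∑ φ, w φ * Pφ φ (p ++ x)) -
      (∑ φ, w φ * Pφ φ (p ++ x ++ [ytil])) / (∑ φ, w φ * Pφ φ (p ++ x)) ≥
    (∑ φ, w φ * Pφ φ p *
        (c1 ^ 2 * Pφ φ (x ++ [y]) - c1⁻¹ ^ 2 * Pφ φ (x ++ [ytil]))) /
      (∑ φ, w φ * Pφ φ p * Pφ φ x) := by
  rcases isEmpty_or_nonempty ι with hE | hNE
  · simp
  have hinv : c1 * c1⁻¹ = 1 := mul_inv_cancel₀ (ne_of_gt hc1)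
  have hic : (0:ℝ) < c1⁻¹ := inv_pos.2 hc1
  -- bounds from approximate independence
  have hA : ∀ φ s, c1 * Pφ φ (p ++ s) ≤ Pφ φ p * Pφ φ s := by
    intro φ s
    have h := (hindep φ s).1
    rw [le_div_iff₀ (hP φ _)] at h
    linarith
  have hAB : ∀ φ s, Pφ φ p * Pφ φ s ≤ c1⁻¹ * Pφ φ (p ++ s) := by
    intro φ s
    have h := (hindep φ s).2
    rw [div_le_div_iff₀ (hP φ _) hc1] at h
    nlinarith [hP φ (p ++ s)]
  have hPlow : ∀ φ s, c1 * (Pφ φ p * Pφ φ s) ≤ Pφ φ (p ++ s) := by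
    intro φ s
    have h := hAB φ s
    nlinarith [hP φ (p ++ s)]
  have hPhigh : ∀ φ s, Pφ φ (p ++ s) ≤ c1⁻¹ * (Pφ φ p * Pφ φ s) := by
    intro φ s
    have h := hA φ s
    nlinarith [hP φ (p ++ s)]
  have hB : (0:ℝ) < ∑ φ, w φ * Pφ φ (p ++ x) :=
    Finset.sum_pos (fun φ _ => mul_pos (hw φ) (hP φ _)) univ_nonempty
  have hD : (0:ℝ) < ∑ φ, w φ * Pφ φ p * Pφ φ x :=
    Finset.sum_pos (fun φ _ => mul_pos (mul_pos (hw φ) (hP φ _)) (hP φ _)) univ_nonempty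
  rw [div_sub_div_same, ge_iff_le, div_le_div_iff₀ hD hB, ← Finset.sum_sub_distrib]
  simp only [List.append_assoc]
  rw [Finset.sum_mul_sum, Finset.sum_mul_sum]
  refine Finset.sum_le_sum fun φ _ => Finset.sum_le_sum fun ψ _ => ?_
  have hpφ := hP φ p
  have hpψ := hP ψ p
  have hxy := hP φ (x ++ [y])
  have hxyt := hP φ (x ++ [ytil])
  have hxψ := hP ψ x
  have key : Pφ φ p * (c1 ^ 2 * Pφ φ (x ++ [y]) - c1⁻¹ ^ 2 * Pφ φ (x ++ [ytil])) *
      Pφ ψ (p ++ x) ≤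
      (Pφ φ (p ++ (x ++ [y])) - Pφ φ (p ++ (x ++ [ytil]))) * (Pφ ψ p * Pφ ψ x) := by
    have e1 := mul_le_mul_of_nonneg_right (hPlow φ (x ++ [y]))
      (le_of_lt (mul_pos hpψ hxψ))
    have e2 := mul_le_mul_of_nonneg_right (hPhigh φ (x ++ [ytil]))
      (le_of_lt (mul_pos hpψ hxψ))
    have e3 := mul_le_mul_of_nonneg_right (hA ψ x)
      (le_of_lt (mul_pos (mul_pos hc1 hpφ) hxy))
    have e4 := mul_le_mul_of_nonneg_right (hAB ψ x)
      (le_of_lt (mul_pos (mul_pos hic hpφ) hxyt))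
    nlinarith [e1, e2, e3, e4]
  calc w φ * Pφ φ p * (c1 ^ 2 * Pφ φ (x ++ [y]) - c1⁻¹ ^ 2 * Pφ φ (x ++ [ytil])) *
        (w ψ * Pφ ψ (p ++ x))
      = (w φ * w ψ) * (Pφ φ p * (c1 ^ 2 * Pφ φ (x ++ [y]) - c1⁻¹ ^ 2 * Pφ φ (x ++ [ytil])) *
        Pφ ψ (p ++ x)) := by ring
    _ ≤ (w φ * w ψ) * ((Pφ φ (p ++ (x ++ [y])) - Pφ φ (p ++ (x ++ [ytil]))) *
        (Pφ ψ p * Pφ ψ x)) :=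
        mul_le_mul_of_nonneg_left key (le_of_lt (mul_pos (hw φ) (hw ψ)))
    _ = (w φ * Pφ φ (p ++ (x ++ [y])) - w φ * Pφ φ (p ++ (x ++ [ytil]))) *
        (w ψ * Pφ ψ p * Pφ ψ x) := by ring
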